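/- Let ≻ be a binary relation on a countable set C. Then the following are equivalent: (1) for every finite sequence of elements of C there is a bijective reordering B with no i < j such that t_{B(j)} ≻ t_{B(i)}; (2) the transitive closure of ≻ is irreflexive; (3) there exists λ : C → ℚ with c ≻ c' implying λ(c) > λ(c'). -/

import Mathlib

open Relation

lemma cycle_defeats {C : Type*} (r : C → C → Prop) {n : ℕ} (hn : 2 ≤ n)
    (t : Fin n → C)
    (ht : ∀ k : Fin n, r (t k) (t ⟨((k : ℕ) + 1) % n, Nat.mod_lt _ (by omega)⟩)) :
    ¬ ∃ B : Equiv.Perm (Fin n), ∀ i j : Fin n, i < j → ¬ r (t (B j)) (t (B i)) := by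
  rintro ⟨B, hB⟩
  haveI : Nonempty (Fin n) := ⟨⟨0, by omega⟩⟩
  obtain ⟨k, hk⟩ := Finite.exists_max (fun j : Fin n => B.symm j)
  set k' : Fin n := ⟨((k : ℕ) + 1) % n, Nat.mod_lt _ (by omega)⟩ with hk'
  have hne : k' ≠ k := by
    intro h
    have hv : ((k : ℕ) + 1) % n = (k : ℕ) := congrArg Fin.val h
    rcases lt_or_eq_of_le (Nat.succ_le_of_lt k.isLt) with h1 | h1
    · rw [Nat.mod_eq_of_lt h1] at hv; omega
    · have h2 : ((k : ℕ) + 1) % n = 0 := by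
        have h3 : (k : ℕ) + 1 = n := h1
        rw [h3, Nat.mod_self]
      omega
  have hlt : B.symm k' < B.symm k :=
    lt_of_le_of_ne (hk _) (fun h => hne (B.symm.injective h))
  have := hB _ _ hlt
  simp only [Equiv.apply_symm_apply] at this
  exact this (ht k)

lemma transGen_to_cycle {C : Type*} {r : C → C → Prop} {c : C}
    (h : Relation.TransGen r c c) :
    ∃ (n : ℕ) (hn : 2 ≤ n) (t : Fin n → C),
      ∀ k : Fin n, r (t k) (t ⟨((k : ℕ) + 1) % n, Nat.mod_lt _ (by omega)⟩) := by
  by_cases hrcc : r c c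
  · exact ⟨2, le_refl 2, fun _ => c, fun k => hrcc⟩
  · obtain ⟨b, hcb, hbc⟩ := Relation.TransGen.head'_iff.mp h
    obtain ⟨l, hl, hlast⟩ := List.exists_isChain_cons_of_relationReflTransGen hbc
    have hlne : l ≠ [] := by
      intro hle
      subst hle
      simp at hlast
      exact hrcc (hlast ▸ hcb)
    set M : List C := c :: b :: l with hM
    have hchain : List.IsChain r M := List.IsChain.cons_cons hcb hl
    have hmlen : M.length = l.length + 2 := by simp [hM]
    set n : ℕ := M.length - 1 with hn
    have hn2 : 2 ≤ n := by
      have := List.length_pos_iff.mpr hlne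
      omega
    have hget := List.isChain_iff_getElem.mp hchain
    have hlastget : M.get ⟨n, by omega⟩ = c := by
      have h1 : M.getLast (by simp [hM]) = c := by
        show (c :: b :: l).getLast (by simp) = c
        rw [List.getLast_cons (by simp)]
        exact hlast
      rw [← h1, List.getLast_eq_getElem]
      rfl
    refine ⟨n, hn2, fun k => M.get ⟨k, by omega⟩, fun k => ?_⟩
    by_cases hk1 : (k : ℕ) + 1 < n
    · have := hget k (by omega)
      have hval : ((k : ℕ) + 1) % n = (k : ℕ) + 1 := Nat.mod_eq_of_lt hk1
      simp only [hval]
      exact this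
    · have hkval : (k : ℕ) = n - 1 := by omega
      have hval : ((k : ℕ) + 1) % n = 0 := by
        rw [hkval]
        have hq : n - 1 + 1 = n := by omega
        rw [hq, Nat.mod_self]
      simp only [hval]
      have h0 : M.get ⟨0, by omega⟩ = c := by simp [hM]
      have hs : M.get ⟨(k : ℕ) + 1, by omega⟩ = c := by
        rw [← hlastget]
        apply congrArg
        apply Fin.ext
        have := k.isLt
        simp
        omega
      have : r (M.get ⟨k, by omega⟩) (M.get ⟨(k : ℕ) + 1, by omega⟩) := hget k (by omega)
      rw [hs] at this
      rw [h0]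
      exact this

lemma irrefl_to_rat {C : Type*} [Countable C] (r : C → C → Prop)
    (h2 : ∀ c, ¬ Relation.TransGen r c c) :
    ∃ f : C → ℚ, ∀ c c', r c c' → f c > f c' := by
  classical
  let s : C → C → Prop := fun a b => Relation.ReflTransGen r b a
  haveI : IsPartialOrder C s := {
    refl := fun a => Relation.ReflTransGen.refl
    trans := fun a b c hab hbc => Relation.ReflTransGen.trans hbc hab
    antisymm := fun a b hab hba => by
      rcases Relation.reflTransGen_iff_eq_or_transGen.mp hab with h | h
      · exact h
      · rcases Relation.reflTransGen_iff_eq_or_transGen.mp hba with h' | h'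
        · exact h'.symm
        · exact absurd (h.trans h') (h2 b) }
  obtain ⟨le, hlin, hle⟩ := extend_partialOrder s
  haveI := hlin
  letI : LinearOrder C := {
    le := le
    le_refl := fun a => refl_of le a
    le_trans := fun a b c => trans_of le
    le_antisymm := fun a b => antisymm_of le
    le_total := fun a b => total_of le a b
    toDecidableLE := Classical.decRel _ }
  obtain ⟨e⟩ : Nonempty (C ↪o ℚ) := Order.embedding_from_countable_to_dense C ℚ
  refine ⟨fun c => e c, fun c c' hr => ?_⟩
  have hne : c' ≠ c := fun hcc =>
    h2 c (Relation.TransGen.single (hcc ▸ hr))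
  have hlt : c' < c := lt_of_le_of_ne (hle _ _ (Relation.ReflTransGen.single hr)) hne
  exact e.strictMono hlt

lemma rat_to_sort {C : Type*} (r : C → C → Prop)
    (h3 : ∃ f : C → ℚ, ∀ c c', r c c' → f c > f c') :
    ∀ (N : ℕ) (t : Fin N → C), ∃ B : Equiv.Perm (Fin N),
      ∀ i j : Fin N, i < j → ¬ r (t (B j)) (t (B i)) := by
  obtain ⟨f, hf⟩ := h3
  intro N t
  set g : Fin N → ℚ := fun i => -(f (t i)) with hg
  refine ⟨Tuple.sort g, fun i j hij hr => ?_⟩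
  have hmono := Tuple.monotone_sort g (le_of_lt hij)
  simp only [Function.comp_apply, hg, neg_le_neg_iff] at hmono
  exact absurd (hf _ _ hr) (not_lt.mpr hmono)

lemma rat_to_irrefl {C : Type*} (r : C → C → Prop)
    (h3 : ∃ f : C → ℚ, ∀ c c', r c c' → f c > f c') :
    ∀ c, ¬ Relation.TransGen r c c := by
  obtain ⟨f, hf⟩ := h3
  have key : ∀ {a b : C}, Relation.TransGen r a b → f a > f b := by
    intro a b h
    induction h with
    | single h => exact hf _ _ h
    | tail _ h ih => exact lt_trans (hf _ _ h) ih
  exact fun c hc => lt_irrefl _ (key hc)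

/-- For a binary relation on a countable set, the following are equivalent:
(1) every finite sequence admits a valid reordering;
(2) the transitive closure is irreflexive;
(3) there is an order-preserving map into ℚ. -/
theorem stmt_17 {C : Type*} [Countable C] (r : C → C → Prop) :
    ((∀ (N : ℕ) (t : Fin N → C), ∃ B : Equiv.Perm (Fin N),
        ∀ i j : Fin N, i < j → ¬ r (t (B j)) (t (B i))) ↔
      (∀ c, ¬ Relation.TransGen r c c)) ∧
    ((∀ c, ¬ Relation.TransGen r c c) ↔
      (∃ f : C → ℚ, ∀ c c', r c c' → f c > f c')) := by
  constructor
  · constructor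
    · intro h1 c hc
      obtain ⟨n, hn, t, ht⟩ := transGen_to_cycle hc
      exact cycle_defeats r hn t ht (h1 n t)
    · intro h2
      exact rat_to_sort r (irrefl_to_rat r h2)
  · exact ⟨fun h2 => irrefl_to_rat r h2, fun h3 => rat_to_irrefl r h3⟩
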